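/- Let G be a 2-edge-connected graph and T ⊆ V(G) with |T| even. Then the minimum cardinality of a T-join in G is at most (1/2)(|V(G)| + φ(G) - 1), where φ(G) is the minimum number of even-length ears over all ear-decompositions of G. -/

import Mathlib

open Finset
open scoped Classical

/-- A multigraph on vertex type `V` with edge index type `E`, no loops. -/
structure MGraph (V E : Type) where
  ends : E → Sym2 V
  not_loop : ∀ e, ¬ (ends e).IsDiag

namespace MGraph

variable {V E : Type} [Fintype V] [Fintype E] [DecidableEq V] [DecidableEq E]

/-- Reachability in the multi-subgraph of `2G` given by multiplicities `m`. -/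
def Reach (G : MGraph V E) (m : E → ℕ) : V → V → Prop :=
  Relation.ReflTransGen (fun a b => ∃ e, 1 ≤ m e ∧ G.ends e = s(a, b))

/-- The multi-subgraph given by multiplicities `m` is spanning and connected. -/
def Conn (G : MGraph V E) (m : E → ℕ) : Prop := ∀ u v : V, G.Reach m u v

/-- Degree of `v` in the multi-subgraph with multiplicities `m`. -/
noncomputable def deg (G : MGraph V E) (m : E → ℕ) (v : V) : ℕ :=
  ∑ e, if v ∈ G.ends e then m e else 0

/-- Number of edges (with multiplicity). -/
def size (m : E → ℕ) : ℕ := ∑ e, m e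

/-- `m` is a multi-subgraph of `2G`. -/
def Sub2 (m : E → ℕ) : Prop := ∀ e, m e ≤ 2

/-- The multi-subgraph `m` is 2-edge-connected: at least two vertices, connected,
and still connected after removing any one edge copy. -/
def TwoEC (G : MGraph V E) (m : E → ℕ) : Prop :=
  2 ≤ Fintype.card V ∧ G.Conn m ∧
    ∀ e, 1 ≤ m e → G.Conn (Function.update m e (m e - 1))

/-- A tour of `G`: a spanning connected multi-subgraph of `2G` with all degrees even. -/
def IsTour (G : MGraph V E) (m : E → ℕ) : Prop :=
  Sub2 m ∧ G.Conn m ∧ ∀ v, Even (G.deg m v)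

/-- A connected-`T`-join of `G`: a `T`-join in `2G` that is spanning and connected. -/
def IsConnTJoin (G : MGraph V E) (T : Finset V) (m : E → ℕ) : Prop :=
  Sub2 m ∧ G.Conn m ∧ ∀ v, (v ∈ T ↔ Odd (G.deg m v))

/-- `G` itself is connected. -/
def Connected (G : MGraph V E) : Prop := G.Conn (fun _ => 1)

/-- `G` itself is 2-edge-connected. -/
def TwoEdgeConnected (G : MGraph V E) : Prop := G.TwoEC (fun _ => 1)

/-- An ear is given by its vertex sequence together with its edge sequence. -/
abbrev Ear (V E : Type) := List V × List E

/-- The list of internal vertices of an ear. -/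
def innList (P : Ear V E) : List V := (P.1.drop 1).dropLast

/-- The set of internal vertices of an ear. -/
def innFinset (P : Ear V E) : Finset V := (innList P).toFinset

/-- `EarOK G prev P`: `P` is a valid ear to attach to the set `prev` of previously
present vertices: consecutive listed vertices are joined by the listed edges, the
(one or two) endpoints lie in `prev`, and the internal vertices are new and distinct. -/
def EarOK (G : MGraph V E) (prev : Set V) (P : Ear V E) : Prop :=
  P.1.length = P.2.length + 1 ∧ P.2 ≠ [] ∧ P.2.Nodup ∧
  (∀ i : ℕ, ∀ h : i < P.2.length, ∃ a b : V,
    P.1[i]? = some a ∧ P.1[i + 1]? = some b ∧ G.ends (P.2.get ⟨i, h⟩) = s(a, b)) ∧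
  (∃ a, P.1.head? = some a ∧ a ∈ prev) ∧
  (∃ b, P.1.getLast? = some b ∧ b ∈ prev) ∧
  (innList P).Nodup ∧
  (∀ x ∈ innList P, x ∉ prev)

/-- The set of vertices present after attaching the given ears to the root `r`. -/
def vertsUpTo (r : V) (ears : List (Ear V E)) : Set V :=
  insert r {x | ∃ P ∈ ears, x ∈ P.1}

/-- `ears` (attached successively to the root `r`) form an ear-decomposition of `G`. -/
def IsEarDecomp (G : MGraph V E) (r : V) (ears : List (Ear V E)) : Prop :=
  (∀ i : ℕ, ∀ h : i < ears.length,
      G.EarOK (vertsUpTo r (ears.take i)) (ears.get ⟨i, h⟩)) ∧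
  vertsUpTo r ears = Set.univ ∧
  (∀ e : E, e ∈ ears.flatMap Prod.snd) ∧
  (ears.flatMap Prod.snd).Nodup

/-- An ear is nontrivial if it has length `> 1`. -/
def Nontriv (P : Ear V E) : Prop := 2 ≤ P.2.length

/-- `Q` is attached to `P` if `Q` has an endpoint among the internal vertices of `P`. -/
def AttachedTo (P Q : Ear V E) : Prop :=
  (∃ a, Q.1.head? = some a ∧ a ∈ innList P) ∨
  (∃ a, Q.1.getLast? = some a ∧ a ∈ innList P)

/-- The `i`-th ear is pendant: nontrivial and no nontrivial ear is attached to it. -/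
def PendantAt (ears : List (Ear V E)) (i : ℕ) (h : i < ears.length) : Prop :=
  Nontriv (ears.get ⟨i, h⟩) ∧
  ∀ j : ℕ, ∀ hj : j < ears.length, j ≠ i → Nontriv (ears.get ⟨j, hj⟩) →
    ¬ AttachedTo (ears.get ⟨i, h⟩) (ears.get ⟨j, hj⟩)

/-- An ear is short if it has length 2 or 3. -/
def ShortEar (P : Ear V E) : Prop := P.2.length = 2 ∨ P.2.length = 3

/-- `φ(G)`: the minimum number of even ears in an ear-decomposition of `G`. -/
noncomputable def phi (G : MGraph V E) : ℕ :=
  sInf {n | ∃ (r : V) (ears : List (Ear V E)), G.IsEarDecomp r ears ∧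
    (ears.countP fun P => decide (Even P.2.length)) = n}

/-- `F` is a `T`-join of `G` (as a plain edge subset of `G`). -/
def IsTJoinF (G : MGraph V E) (T : Finset V) (F : Finset E) : Prop :=
  ∀ v, (v ∈ T ↔ Odd (G.deg (fun e => if e ∈ F then 1 else 0) v))

set_option linter.unusedSectionVars false

noncomputable def bd (G : MGraph V E) (F : Finset E) (v : V) : ZMod 2 :=
  ∑ e ∈ F, if v ∈ G.ends e then 1 else 0

lemma zmod2_cases (x : ZMod 2) : x = 0 ∨ x = 1 := by revert x; decide

lemma natCast_zmod2_eq_one_iff (n : ℕ) : (n : ZMod 2) = 1 ↔ Odd n := by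
  rw [Nat.odd_iff]
  have key : (n : ZMod 2) = ((n % 2 : ℕ) : ZMod 2) := (ZMod.natCast_mod n 2).symm
  rcases Nat.mod_two_eq_zero_or_one n with h0 | h1
  · rw [key, h0]; simp [h0]
  · rw [key, h1]; simp [h1]

lemma bd_union (G : MGraph V E) {F₁ F₂ : Finset E} (h : Disjoint F₁ F₂) (v : V) :
    G.bd (F₁ ∪ F₂) v = G.bd F₁ v + G.bd F₂ v := Finset.sum_union h

lemma bd_empty (G : MGraph V E) (v : V) : G.bd ∅ v = 0 := rfl

lemma ends_two (G : MGraph V E) (e : E) : ∃ a b : V, a ≠ b ∧ G.ends e = s(a, b) := by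
  obtain ⟨⟨a, b⟩, hab⟩ := Quot.exists_rep (G.ends e)
  refine ⟨a, b, fun h => G.not_loop e ?_, hab.symm⟩
  rw [← hab, h]
  exact Sym2.mk_isDiag_iff.2 rfl

lemma sum_bd (G : MGraph V E) (F : Finset E) : ∑ v, G.bd F v = 0 := by
  unfold bd
  rw [Finset.sum_comm]
  refine Finset.sum_eq_zero fun e _ => ?_
  obtain ⟨a, b, hab, he⟩ := G.ends_two e
  rw [he]
  have h1 : ∀ v : V, (if v ∈ s(a,b) then (1 : ZMod 2) else 0)
      = if v ∈ ({a,b} : Finset V) then 1 else 0 := by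
    intro v; simp [Sym2.mem_iff]
  simp_rw [h1, Finset.sum_ite_mem, Finset.univ_inter, Finset.sum_const,
    Finset.card_pair hab]
  decide

lemma deg_eq_sum (G : MGraph V E) (F : Finset E) (v : V) :
    G.deg (fun e => if e ∈ F then 1 else 0) v
      = ∑ e ∈ F, if v ∈ G.ends e then 1 else 0 := by
  unfold deg
  have h1 : ∀ e : E, (if v ∈ G.ends e then (if e ∈ F then (1:ℕ) else 0) else 0)
      = if e ∈ F then (if v ∈ G.ends e then 1 else 0) else 0 := by
    intro e; split_ifs <;> rfl
  simp_rw [h1]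
  rw [Finset.sum_ite_mem, Finset.univ_inter]

lemma odd_deg_iff_bd (G : MGraph V E) (F : Finset E) (v : V) :
    Odd (G.deg (fun e => if e ∈ F then 1 else 0) v) ↔ G.bd F v = 1 := by
  rw [← natCast_zmod2_eq_one_iff, deg_eq_sum]
  unfold bd
  have h2 : ((∑ e ∈ F, if v ∈ G.ends e then (1:ℕ) else 0 : ℕ) : ZMod 2)
      = ∑ e ∈ F, if v ∈ G.ends e then (1 : ZMod 2) else 0 := by
    rw [Nat.cast_sum]
    refine Finset.sum_congr rfl fun e _ => ?_
    split_ifs <;> simp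
  rw [h2]


section PathParity

variable (G : MGraph V E)

lemma bd_image {C : Finset ℕ} {ℓ j : ℕ} (w : ℕ → V) (f : ℕ → E)
    (hC : ∀ k ∈ C, k < ℓ)
    (hends : ∀ k, k < ℓ → G.ends (f k) = s(w k, w (k+1)))
    (finj : ∀ j k, j < ℓ → k < ℓ → f j = f k → j = k)
    (hw : ∀ a b, 1 ≤ a → a ≤ ℓ - 1 → b ≤ ℓ → w a = w b → a = b)
    (hℓ : 1 ≤ ℓ) (hj : 1 ≤ j) (hj2 : j ≤ ℓ - 1) :
    G.bd (C.image f) (w j)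
      = (if j - 1 ∈ C then 1 else 0) + (if j ∈ C then 1 else 0) := by
  unfold bd
  rw [Finset.sum_image (fun a ha b hb hab => finj a b (hC a ha) (hC b hb) hab)]
  have key : ∀ k ∈ C, (if w j ∈ G.ends (f k) then (1 : ZMod 2) else 0)
      = (if k = j - 1 then 1 else 0) + (if k = j then 1 else 0) := by
    intro k hk
    have hkℓ := hC k hk
    rw [hends k hkℓ]
    simp only [Sym2.mem_iff]
    have hiff : (w j = w k ∨ w j = w (k+1)) ↔ (k = j - 1 ∨ k = j) := by
      constructor
      · rintro (h | h)
        · right; exact (hw j k hj hj2 (by omega) h).symm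
        · left
          have := hw j (k+1) hj hj2 (by omega) h
          omega
      · rintro (h | h)
        · right; congr 1; omega
        · left; congr 1; omega
    by_cases h1 : w j = w k ∨ w j = w (k+1)
    · rcases hiff.1 h1 with h | h
      · rw [if_pos h1, if_pos h, if_neg (show ¬ k = j by omega)]; decide
      · rw [if_pos h1, if_neg (show ¬ k = j - 1 by omega), if_pos h]; decide
    · have nk1 : ¬ k = j - 1 := fun h => h1 (hiff.2 (Or.inl h))
      have nk2 : ¬ k = j := fun h => h1 (hiff.2 (Or.inr h))
      rw [if_neg h1, if_neg nk1, if_neg nk2]; decide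
  refine (Finset.sum_congr rfl key).trans ?_
  rw [Finset.sum_add_distrib]
  congr 1
  · rw [Finset.sum_ite_eq' C (j-1) (fun _ => (1:ZMod 2))]
  · rw [Finset.sum_ite_eq' C j (fun _ => (1:ZMod 2))]

lemma path_parity (ℓ : ℕ) (hℓ : 1 ≤ ℓ) (w : ℕ → V) (f : ℕ → E)
    (hends : ∀ k, k < ℓ → G.ends (f k) = s(w k, w (k+1)))
    (finj : ∀ j k, j < ℓ → k < ℓ → f j = f k → j = k)
    (hw : ∀ a b, 1 ≤ a → a ≤ ℓ - 1 → b ≤ ℓ → w a = w b → a = b)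
    (t : V → ZMod 2) :
    ∃ S : Finset E, (∀ e ∈ S, ∃ k, k < ℓ ∧ e = f k) ∧
      (∀ j, 1 ≤ j → j ≤ ℓ - 1 → G.bd S (w j) = t (w j)) ∧
      2 * S.card ≤ ℓ - 1 + (if Even ℓ then 1 else 0) := by
  set pre : ℕ → ZMod 2 := fun k => ∑ i ∈ Finset.Icc 1 k, t (w i) with hpre
  have prestep : ∀ m : ℕ, pre (m + 1) = pre m + t (w (m + 1)) := by
    intro m
    rw [hpre]
    simp only
    rw [Finset.sum_Icc_succ_top (by omega)]
  set A : Finset ℕ := (Finset.range ℓ).filter (fun k => pre k = 1) with hA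
  set B : Finset ℕ := (Finset.range ℓ).filter (fun k => ¬ pre k = 1) with hB
  have hAsub : ∀ k ∈ A, k < ℓ := fun k hk => Finset.mem_range.1 (Finset.mem_filter.1 hk).1
  have hBsub : ∀ k ∈ B, k < ℓ := fun k hk => Finset.mem_range.1 (Finset.mem_filter.1 hk).1
  have cardAB : A.card + B.card = ℓ := by
    rw [hA, hB, Finset.card_filter_add_card_filter_not]
    exact Finset.card_range ℓ
  have hgoalA : ∀ j, 1 ≤ j → j ≤ ℓ - 1 → G.bd (A.image f) (w j) = t (w j) := by
    intro j hj hj2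
    rw [G.bd_image w f hAsub hends finj hw hℓ hj hj2]
    obtain ⟨m, rfl⟩ : ∃ m, j = m + 1 := ⟨j - 1, by omega⟩
    have hmem1 : (m + 1 - 1 ∈ A) ↔ pre m = 1 := by
      rw [hA]
      simp only [Finset.mem_filter, Finset.mem_range]
      constructor
      · rintro ⟨_, h⟩
        simpa using h
      · intro h
        exact ⟨by omega, by simpa using h⟩
    have hmem2 : (m + 1 ∈ A) ↔ pre (m+1) = 1 := by
      rw [hA]
      simp only [Finset.mem_filter, Finset.mem_range]
      exact ⟨fun h => h.2, fun h => ⟨by omega, h⟩⟩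
    rw [if_congr hmem1 rfl rfl, if_congr hmem2 rfl rfl, prestep m]
    rcases zmod2_cases (pre m) with h | h <;>
      rcases zmod2_cases (t (w (m+1))) with h' | h' <;>
      rw [h, h'] <;> decide
  have hgoalB : ∀ j, 1 ≤ j → j ≤ ℓ - 1 → G.bd (B.image f) (w j) = t (w j) := by
    intro j hj hj2
    rw [G.bd_image w f hBsub hends finj hw hℓ hj hj2]
    obtain ⟨m, rfl⟩ : ∃ m, j = m + 1 := ⟨j - 1, by omega⟩
    have hmem1 : (m + 1 - 1 ∈ B) ↔ ¬ pre m = 1 := by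
      rw [hB]
      simp only [Finset.mem_filter, Finset.mem_range]
      constructor
      · rintro ⟨_, h⟩
        simpa using h
      · intro h
        exact ⟨by omega, by simpa using h⟩
    have hmem2 : (m + 1 ∈ B) ↔ ¬ pre (m+1) = 1 := by
      rw [hB]
      simp only [Finset.mem_filter, Finset.mem_range]
      exact ⟨fun h => h.2, fun h => ⟨by omega, h⟩⟩
    rw [if_congr hmem1 rfl rfl, if_congr hmem2 rfl rfl, prestep m]
    rcases zmod2_cases (pre m) with h | h <;>
      rcases zmod2_cases (t (w (m+1))) with h' | h' <;>
      rw [h, h'] <;> decide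
  have cardA : (A.image f).card = A.card :=
    Finset.card_image_of_injOn (fun a ha b hb hab => finj a b (hAsub a ha) (hAsub b hb) hab)
  have cardB : (B.image f).card = B.card :=
    Finset.card_image_of_injOn (fun a ha b hb hab => finj a b (hBsub a ha) (hBsub b hb) hab)
  have hpar : ℓ % 2 = 0 ↔ Even ℓ := by rw [Nat.even_iff]
  by_cases hle : 2 * A.card ≤ ℓ - 1 + (if Even ℓ then 1 else 0)
  · refine ⟨A.image f, ?_, hgoalA, by rwa [cardA]⟩
    intro e he
    obtain ⟨k, hk, rfl⟩ := Finset.mem_image.1 he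
    exact ⟨k, hAsub k hk, rfl⟩
  · refine ⟨B.image f, ?_, hgoalB, ?_⟩
    · intro e he
      obtain ⟨k, hk, rfl⟩ := Finset.mem_image.1 he
      exact ⟨k, hBsub k hk, rfl⟩
    · rw [cardB]
      rcases Nat.even_or_odd ℓ with hev | hod
      · rw [if_pos hev] at *
        omega
      · have h1 : ¬ Even ℓ := Nat.not_even_iff_odd.2 hod
        rw [if_neg h1] at *
        have : ℓ % 2 = 1 := Nat.odd_iff.1 hod
        omega

end PathParity



section EarData

variable (G : MGraph V E) {prev : Set V} {P : Ear V E}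

lemma innList_length (P : Ear V E) : (innList P).length = P.1.length - 2 := by
  unfold innList
  rw [List.length_dropLast, List.length_drop]
  omega

lemma innList_getElem (P : Ear V E) (j : ℕ) (h : j < (innList P).length) :
    (innList P)[j] = P.1[j + 1]'(by have := innList_length P; omega) := by
  unfold innList at *
  rw [List.getElem_dropLast, List.getElem_drop]
  congr 1
  omega

/-- Data extraction from EarOK. -/
lemma earOK_data (hOK : G.EarOK prev P) :
    ∃ (w : ℕ → V) (f : ℕ → E),
      (∀ k, k < P.2.length → G.ends (f k) = s(w k, w (k+1))) ∧
      (∀ j k, j < P.2.length → k < P.2.length → f j = f k → j = k) ∧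
      (∀ a b, 1 ≤ a → a ≤ P.2.length - 1 → b ≤ P.2.length → w a = w b → a = b) ∧
      (∀ e, e ∈ P.2 ↔ ∃ k, k < P.2.length ∧ e = f k) ∧
      (∀ x, x ∈ P.1 ↔ ∃ k, k ≤ P.2.length ∧ x = w k) ∧
      (∀ x, x ∈ innList P ↔ ∃ j, 1 ≤ j ∧ j ≤ P.2.length - 1 ∧ x = w j) ∧
      (w 0 ∈ prev) ∧ (w P.2.length ∈ prev) ∧ 1 ≤ P.2.length := by
  obtain ⟨hlen, hne2, hnd2, hchain, ⟨a0, ha0, ha0p⟩, ⟨b0, hb0, hb0p⟩, hinnnd, hinnp⟩ := hOK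
  set ℓ := P.2.length with hℓdef
  have hℓ1 : 1 ≤ ℓ := List.length_pos_iff.2 hne2
  have hne1 : P.1 ≠ [] := List.ne_nil_of_length_pos (by omega)
  have hinn_len : (innList P).length = ℓ - 1 := by rw [innList_length]; omega
  set w : ℕ → V := fun k => P.1.getD k (P.1.head hne1) with hwdef
  set f : ℕ → E := fun k => P.2.getD k (P.2.head hne2) with hfdef
  have hwval : ∀ k (hk : k < P.1.length), w k = P.1[k] := by
    intro k hk
    rw [hwdef]
    simp only
    rw [List.getD_eq_getElem _ _ hk]
  have hfval : ∀ k (hk : k < ℓ), f k = P.2[k] := by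
    intro k hk
    rw [hfdef]
    simp only
    rw [List.getD_eq_getElem _ _ hk]
  have hw0 : w 0 ∈ prev := by
    rw [List.head?_eq_getElem?, List.getElem?_eq_getElem (by omega : 0 < P.1.length),
      Option.some.injEq] at ha0
    rw [hwval 0 (by omega), ha0]
    exact ha0p
  have hwℓ : w ℓ ∈ prev := by
    rw [List.getLast?_eq_getElem?,
      List.getElem?_eq_getElem (by omega : P.1.length - 1 < P.1.length),
      Option.some.injEq] at hb0
    rw [hwval ℓ (by omega)]
    have : P.1[P.1.length - 1]'(by omega) = P.1[ℓ]'(by omega) := by congr 1; omega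
    rw [← this, hb0]
    exact hb0p
  have hinn : ∀ j (h1 : 1 ≤ j) (h2 : j ≤ ℓ - 1),
      w j = (innList P)[j - 1]'(by omega) := by
    intro j h1 h2
    rw [innList_getElem P (j-1) (by omega), hwval j (by omega)]
    congr 1
    omega
  have hinnmem : ∀ x, x ∈ innList P ↔ ∃ j, 1 ≤ j ∧ j ≤ ℓ - 1 ∧ x = w j := by
    intro x
    rw [List.mem_iff_getElem]
    constructor
    · rintro ⟨k, hk, rfl⟩
      refine ⟨k + 1, by omega, by omega, ?_⟩
      rw [hinn (k+1) (by omega) (by omega)]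
      simp
    · rintro ⟨j, hj1, hj2, rfl⟩
      exact ⟨j - 1, by omega, (hinn j hj1 hj2).symm⟩
  refine ⟨w, f, ?_, ?_, ?_, ?_, ?_, hinnmem, hw0, hwℓ, hℓ1⟩
  · -- hends
    intro k hk
    obtain ⟨a, b, ha, hb, he⟩ := hchain k hk
    rw [List.getElem?_eq_getElem (by omega : k < P.1.length), Option.some.injEq] at ha
    rw [List.getElem?_eq_getElem (by omega : k + 1 < P.1.length), Option.some.injEq] at hb
    rw [hfval k hk, hwval k (by omega), hwval (k+1) (by omega), ha, hb]
    convert he using 2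
    rfl
  · -- finj
    intro j k hj hk hf
    rw [hfval j hj, hfval k hk] at hf
    have := List.nodup_iff_injective_get.1 hnd2
      (show P.2.get ⟨j, hj⟩ = P.2.get ⟨k, hk⟩ by simpa using hf)
    simpa using Fin.val_eq_of_eq this
  · -- hw distinctness
    intro a b ha1 ha2 hb hab
    have haI : w a ∈ innList P := (hinnmem (w a)).2 ⟨a, ha1, ha2, rfl⟩
    rcases Nat.eq_zero_or_pos b with hb0' | hbpos
    · exfalso
      subst hb0'
      exact hinnp _ haI (hab ▸ hw0)
    rcases Nat.lt_or_ge b ℓ with hbl | hbe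
    · rw [hinn a ha1 ha2, hinn b hbpos (by omega)] at hab
      have := List.nodup_iff_injective_get.1 hinnnd
        (show (innList P).get ⟨a-1, by omega⟩ = (innList P).get ⟨b-1, by omega⟩ by
          simpa using hab)
      have := Fin.val_eq_of_eq this
      simp at this
      omega
    · have hbℓ : b = ℓ := by omega
      subst hbℓ
      exact absurd (hab ▸ hwℓ) (hinnp _ haI)
  · -- f mem
    intro e
    rw [List.mem_iff_getElem]
    constructor
    · rintro ⟨k, hk, rfl⟩
      exact ⟨k, by omega, (hfval k hk).symm⟩
    · rintro ⟨k, hk, rfl⟩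
      exact ⟨k, by omega, (hfval k hk).symm⟩
  · -- mem P.1
    intro x
    rw [List.mem_iff_getElem]
    constructor
    · rintro ⟨k, hk, rfl⟩
      exact ⟨k, by omega, (hwval k hk).symm⟩
    · rintro ⟨k, hk, rfl⟩
      exact ⟨k, by omega, (hwval k (by omega)).symm⟩

lemma earStep (hOK : G.EarOK prev P) (t : V → ZMod 2) :
    ∃ S : Finset E, (∀ e ∈ S, e ∈ P.2) ∧
      (∀ v ∈ innList P, G.bd S v = t v) ∧
      (∀ v, v ∉ prev → v ∉ innList P → G.bd S v = 0) ∧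
      2 * S.card ≤ (P.2.length - 1) + (if Even P.2.length then 1 else 0) := by
  obtain ⟨w, f, hends, finj, hw, hfmem, hmem1, hinnmem, hw0, hwℓ, hℓ1⟩ := G.earOK_data hOK
  obtain ⟨S, hSsub, hSbd, hScard⟩ := G.path_parity P.2.length hℓ1 w f hends finj hw t
  refine ⟨S, ?_, ?_, ?_, hScard⟩
  · intro e he
    obtain ⟨k, hk, rfl⟩ := hSsub e he
    exact (hfmem _).2 ⟨k, hk, rfl⟩
  · intro v hv
    obtain ⟨j, hj1, hj2, rfl⟩ := (hinnmem v).1 hv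
    exact hSbd j hj1 hj2
  · intro v hv1 hv2
    unfold bd
    refine Finset.sum_eq_zero fun e he => ?_
    obtain ⟨k, hk, rfl⟩ := hSsub e he
    rw [hends k hk, if_neg]
    intro hvmem
    rw [Sym2.mem_iff] at hvmem
    have hj : ∃ j, j ≤ P.2.length ∧ v = w j := by
      rcases hvmem with h | h
      exacts [⟨k, by omega, h⟩, ⟨k+1, by omega, h⟩]
    obtain ⟨j, hj, rfl⟩ := hj
    rcases Nat.eq_zero_or_pos j with rfl | hj1
    · exact hv1 hw0
    rcases Nat.lt_or_ge j P.2.length with hjl | hje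
    · exact hv2 ((hinnmem _).2 ⟨j, hj1, by omega, rfl⟩)
    · have hje' : j = P.2.length := by omega
      subst hje'
      exact hv1 hwℓ

/-- every vertex of an ear is either previously present or internal -/
lemma earOK_mem_cases (hOK : G.EarOK prev P) :
    ∀ v ∈ P.1, v ∈ prev ∨ v ∈ innList P := by
  obtain ⟨w, f, hends, finj, hw, hfmem, hmem1, hinnmem, hw0, hwℓ, hℓ1⟩ := G.earOK_data hOK
  intro v hv
  obtain ⟨k, hk, rfl⟩ := (hmem1 v).1 hv
  rcases Nat.eq_zero_or_pos k with rfl | hk1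
  · exact Or.inl hw0
  rcases Nat.lt_or_ge k P.2.length with hkl | hke
  · exact Or.inr ((hinnmem _).2 ⟨k, hk1, by omega, rfl⟩)
  · have : k = P.2.length := by omega
    subst this
    exact Or.inl hwℓ

/-- ends of ear edges lie on the ear -/
lemma earOK_ends_mem (hOK : G.EarOK prev P) :
    ∀ e ∈ P.2, ∀ v, v ∈ G.ends e → v ∈ P.1 := by
  obtain ⟨w, f, hends, finj, hw, hfmem, hmem1, hinnmem, hw0, hwℓ, hℓ1⟩ := G.earOK_data hOK
  intro e he v hv
  obtain ⟨k, hk, rfl⟩ := (hfmem e).1 he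
  rw [hends k hk, Sym2.mem_iff] at hv
  rcases hv with h | h
  · exact (hmem1 _).2 ⟨k, by omega, h⟩
  · exact (hmem1 _).2 ⟨k + 1, by omega, h⟩

lemma innList_subset (P : Ear V E) : ∀ x ∈ innList P, x ∈ P.1 := by
  intro x hx
  unfold innList at hx
  exact List.drop_subset _ _ (List.dropLast_subset _ hx)

end EarData



lemma main_ind (G : MGraph V E) (r : V) (ears : List (Ear V E))
    (hOKs : ∀ i : ℕ, ∀ h : i < ears.length,
      G.EarOK (vertsUpTo r (ears.take i)) (ears.get ⟨i, h⟩))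
    (hnd : (ears.flatMap Prod.snd).Nodup) :
    ∀ i, i ≤ ears.length → ∀ t : V → ZMod 2,
      (∀ v, t v ≠ 0 → v ∈ vertsUpTo r (ears.take i)) → (∑ v, t v) = 0 →
      ∃ F : Finset E, (∀ e ∈ F, e ∈ (ears.take i).flatMap Prod.snd) ∧
        (∀ v, G.bd F v = t v) ∧
        2 * F.card ≤ ((ears.take i).map
          (fun P => P.2.length - 1 + if Even P.2.length then 1 else 0)).sum := by
  intro i
  induction i with
  | zero =>
    intro _ t hsupp hsum
    have htr : ∀ v, t v ≠ 0 → v = r := by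
      intro v hv
      have := hsupp v hv
      simpa [vertsUpTo] using this
    have ht : ∀ v, t v = 0 := by
      intro v
      by_cases hvr : v = r
      · subst hvr
        rw [← hsum]
        symm
        apply Finset.sum_eq_single_of_mem v (Finset.mem_univ v)
        intro b _ hb
        by_contra h
        exact hb (htr b h)
      · by_contra h
        exact hvr (htr v h)
    exact ⟨∅, by simp, fun v => by rw [G.bd_empty, ht v], by simp⟩
  | succ i ih =>
    intro hi t hsupp hsum
    have hilen : i < ears.length := by omega
    set P := ears.get ⟨i, hilen⟩ with hPdef
    have htake : ears.take (i+1) = ears.take i ++ [P] := by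
      rw [List.take_succ]
      congr
      rw [List.getElem?_eq_getElem hilen]
      rfl
    obtain ⟨S, hS1, hS2, hS3, hS4⟩ := G.earStep (hOKs i hilen) t
    set t' : V → ZMod 2 := fun v => t v - G.bd S v with ht'def
    have hsupp' : ∀ v, t' v ≠ 0 → v ∈ vertsUpTo r (ears.take i) := by
      intro v hv'
      by_contra hnp
      have hvinn : v ∉ innList P := by
        intro h
        apply hv'
        rw [ht'def]
        simp only
        rw [hS2 v h, sub_self]
      have hbd0 : G.bd S v = 0 := hS3 v hnp hvinn
      have htv : t v ≠ 0 := by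
        intro h
        apply hv'
        rw [ht'def]
        simp only
        rw [h, hbd0, sub_self]
      have hvmem := hsupp v htv
      rw [htake] at hvmem
      rcases Set.mem_insert_iff.1 hvmem with rfl | ⟨Q, hQ, hvQ⟩
      · exact hnp (Set.mem_insert _ _)
      · rcases List.mem_append.1 hQ with hQ1 | hQ2
        · exact hnp (Set.mem_insert_iff.2 (Or.inr ⟨Q, hQ1, hvQ⟩))
        · have : Q = P := by simpa using hQ2
          subst this
          rcases G.earOK_mem_cases (hOKs i hilen) v hvQ with h | h
          · exact hnp h
          · exact hvinn h
    have hsum' : ∑ v, t' v = 0 := by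
      rw [ht'def]
      simp only
      rw [Finset.sum_sub_distrib, hsum, G.sum_bd, sub_self]
    obtain ⟨F', hF'1, hF'2, hF'3⟩ := ih (by omega) t' hsupp' hsum'
    -- disjointness
    have hndpre : ((ears.take (i+1)).flatMap Prod.snd).Nodup := by
      have h1 : ears.flatMap Prod.snd
          = ((ears.take (i+1)).flatMap Prod.snd) ++ ((ears.drop (i+1)).flatMap Prod.snd) := by
        rw [← List.flatMap_append, List.take_append_drop]
      rw [h1] at hnd
      exact hnd.of_append_left
    have hsplit : (ears.take (i+1)).flatMap Prod.snd
        = ((ears.take i).flatMap Prod.snd) ++ P.2 := by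
      rw [htake]
      simp
    rw [hsplit] at hndpre
    have hdisjL : ((ears.take i).flatMap Prod.snd).Disjoint P.2 :=
      List.disjoint_of_nodup_append hndpre
    have hdisj : Disjoint F' S := by
      rw [Finset.disjoint_left]
      intro e heF' heS
      exact hdisjL (hF'1 e heF') (hS1 e heS)
    refine ⟨F' ∪ S, ?_, ?_, ?_⟩
    · intro e he
      rw [hsplit]
      rcases Finset.mem_union.1 he with h | h
      · exact List.mem_append_left _ (hF'1 e h)
      · exact List.mem_append_right _ (hS1 e h)
    · intro v
      rw [G.bd_union hdisj v, hF'2 v, ht'def]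
      simp only
      ring
    · rw [Finset.card_union_of_disjoint hdisj, htake]
      rw [List.map_append, List.sum_append]
      simp only [List.map_cons, List.map_nil, List.sum_cons, List.sum_nil, add_zero]
      simp only [← hPdef] at hS4 ⊢
      omega




lemma sum_map_add {α : Type*} (l : List α) (f g : α → ℕ) :
    (l.map (fun a => f a + g a)).sum = (l.map f).sum + (l.map g).sum := by
  induction l with
  | nil => simp
  | cons a l ih => simp [ih]; omega

lemma sum_map_ite_countP {α : Type*} (l : List α) (p : α → Prop) [DecidablePred p] :
    (l.map (fun a => if p a then 1 else 0)).sum = l.countP (fun a => decide (p a)) := by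
  induction l with
  | nil => simp
  | cons a l ih =>
    rw [List.map_cons, List.sum_cons, List.countP_cons, ih]
    by_cases h : p a <;> simp [h] <;> omega

lemma inn_flat_nodup (G : MGraph V E) (r : V) (ears : List (Ear V E))
    (hOKs : ∀ i : ℕ, ∀ h : i < ears.length,
      G.EarOK (vertsUpTo r (ears.take i)) (ears.get ⟨i, h⟩)) :
    ∀ i, i ≤ ears.length →
      ((ears.take i).flatMap innList).Nodup ∧
      (∀ x ∈ (ears.take i).flatMap innList, x ∈ vertsUpTo r (ears.take i) ∧ x ≠ r) := by
  intro i
  induction i with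
  | zero => simp
  | succ i ih =>
    intro hi
    have hilen : i < ears.length := by omega
    obtain ⟨ihnd, ihmem⟩ := ih (by omega)
    set P := ears.get ⟨i, hilen⟩ with hPdef
    have htake : ears.take (i+1) = ears.take i ++ [P] := by
      rw [List.take_succ]
      congr
      rw [List.getElem?_eq_getElem hilen]
      rfl
    have hOK := hOKs i hilen
    have hinnnd : (innList P).Nodup := hOK.2.2.2.2.2.2.1
    have hinnp : ∀ x ∈ innList P, x ∉ vertsUpTo r (ears.take i) := hOK.2.2.2.2.2.2.2
    have hflat : (ears.take (i+1)).flatMap innList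
        = ((ears.take i).flatMap innList) ++ innList P := by
      rw [htake]
      simp
    constructor
    · rw [hflat, List.nodup_append]
      refine ⟨ihnd, hinnnd, ?_⟩
      intro x hx y hy hxy
      exact hinnp y hy (hxy ▸ (ihmem x hx).1)
    · intro x hx
      rw [hflat] at hx
      have hsub : vertsUpTo r (ears.take i) ⊆ vertsUpTo r (ears.take (i+1)) := by
        intro y hy
        rcases Set.mem_insert_iff.1 hy with rfl | ⟨Q, hQ, hyQ⟩
        · exact Set.mem_insert _ _
        · refine Set.mem_insert_iff.2 (Or.inr ⟨Q, ?_, hyQ⟩)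
          rw [htake]
          exact List.mem_append_left _ hQ
      rcases List.mem_append.1 hx with h | h
      · exact ⟨hsub (ihmem x h).1, (ihmem x h).2⟩
      · constructor
        · refine Set.mem_insert_iff.2 (Or.inr ⟨P, ?_, innList_subset P x h⟩)
          rw [htake]
          exact List.mem_append_right _ (by simp)
        · intro hxr
          exact hinnp x h (hxr ▸ Set.mem_insert _ _)

/-- Given an ear decomposition, build a T-join of the right size. -/
lemma decomp_to_tjoin (G : MGraph V E) (r : V) (ears : List (Ear V E))
    (hED : G.IsEarDecomp r ears) (T : Finset V) (hT : Even T.card) :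
    ∃ F : Finset E, G.IsTJoinF T F ∧
      2 * F.card + 1 ≤ Fintype.card V
        + ears.countP (fun P => decide (Even P.2.length)) := by
  obtain ⟨hOKs, hverts, hcov, hnd⟩ := hED
  set t : V → ZMod 2 := fun v => if v ∈ T then 1 else 0 with htdef
  have hsum : ∑ v, t v = 0 := by
    rw [htdef]
    simp only
    rw [Finset.sum_ite_mem, Finset.univ_inter, Finset.sum_const, nsmul_eq_mul, mul_one]
    obtain ⟨k, hk⟩ := hT
    rw [hk, Nat.cast_add]
    exact CharTwo.add_self_eq_zero _
  have hsupp : ∀ v, t v ≠ 0 → v ∈ vertsUpTo r (ears.take ears.length) := by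
    intro v _
    rw [List.take_length, hverts]
    trivial
  obtain ⟨F, hF1, hF2, hF3⟩ :=
    G.main_ind r ears hOKs hnd ears.length (le_refl _) t hsupp hsum
  rw [List.take_length] at hF1 hF3
  refine ⟨F, ?_, ?_⟩
  · intro v
    rw [G.odd_deg_iff_bd, hF2 v, htdef]
    simp only
    by_cases h : v ∈ T
    · simp [h]
    · simp [h]
  · -- cost bound
    have hsplit : (ears.map (fun P => P.2.length - 1 + if Even P.2.length then 1 else 0)).sum
        = (ears.map (fun P => P.2.length - 1)).sum
          + (ears.map (fun P => if Even P.2.length then 1 else 0)).sum :=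
      sum_map_add ears _ _
    have hcount := sum_map_ite_countP ears (fun P : Ear V E => Even P.2.length)
    -- internal vertices bound
    obtain ⟨hnd', hmem'⟩ := G.inn_flat_nodup r ears hOKs ears.length (le_refl _)
    rw [List.take_length] at hnd' hmem'
    have hlen1 : (ears.flatMap innList).length
        = (ears.map (fun P => P.2.length - 1)).sum := by
      rw [List.length_flatMap]
      congr 1
      apply List.map_congr_left
      intro P hP
      obtain ⟨j, hj, rfl⟩ := List.mem_iff_getElem.1 hP
      have hl := (hOKs j hj).1
      rw [innList_length]
      have hgg : ears.get ⟨j, hj⟩ = ears[j] := rfl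
      rw [hgg] at hl
      omega
    have hsubset : (ears.flatMap innList).toFinset ⊆ Finset.univ.erase r := by
      intro x hx
      rw [List.mem_toFinset] at hx
      exact Finset.mem_erase.2 ⟨(hmem' x hx).2, Finset.mem_univ x⟩
    have hcard1 : (ears.flatMap innList).toFinset.card = (ears.flatMap innList).length :=
      List.toFinset_card_of_nodup hnd'
    have hcard2 : (Finset.univ.erase r).card = Fintype.card V - 1 := by
      rw [Finset.card_erase_of_mem (Finset.mem_univ r), Finset.card_univ]
    have := Finset.card_le_card hsubset
    rw [hcard1, hcard2, hlen1] at this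
    have hrV : 1 ≤ Fintype.card V := Fintype.card_pos_iff.2 ⟨r⟩
    omega



section Walks

variable (G : MGraph V E)

lemma frontier (m : E → ℕ) (W : Set V) (D : Set E)
    (hD : ∀ e ∈ D, ∀ v, v ∈ G.ends e → v ∈ W) {r x : V} (hrW : r ∈ W)
    (h : G.Reach m r x) :
    x ∈ W ∨ ∃ e, e ∉ D ∧ ∃ a, a ∈ W ∧ a ∈ G.ends e := by
  induction h with
  | refl => exact Or.inl hrW
  | @tail b c hab hbc ih =>
    rcases ih with hbW | hdone
    · obtain ⟨e, hme, hends⟩ := hbc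
      by_cases heD : e ∈ D
      · left
        apply hD e heD
        rw [hends]
        exact Sym2.mem_mk_right _ _
      · right
        exact ⟨e, heD, b, hbW, by rw [hends]; exact Sym2.mem_mk_left _ _⟩
    · exact Or.inr hdone

/-- a walk from `u` into `W`, staying outside `W` until the end -/
def GoodWalk (m : E → ℕ) (W : Set V) (u : V) (n : ℕ) (w : ℕ → V) (f : ℕ → E) : Prop :=
  w 0 = u ∧ w n ∈ W ∧ (∀ k, k < n → w k ∉ W) ∧
    (∀ k, k < n → G.ends (f k) = s(w k, w (k+1))) ∧ (∀ k, k < n → 1 ≤ m (f k))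

lemma reach_goodwalk (m : E → ℕ) (W : Set V) (r : V) (hrW : r ∈ W) (hE : Nonempty E) :
    ∀ u, G.Reach m u r → ∃ n w f, G.GoodWalk m W u n w f := by
  have f0 : E := Classical.choice hE
  intro u h
  induction h using Relation.ReflTransGen.head_induction_on with
  | refl =>
    exact ⟨0, fun _ => r, fun _ => f0, rfl, hrW, fun k hk => absurd hk (by omega),
      fun k hk => absurd hk (by omega), fun k hk => absurd hk (by omega)⟩
  | @head a c hac hcr ih =>
    by_cases haW : a ∈ W
    · exact ⟨0, fun _ => a, fun _ => f0, rfl, haW, fun k hk => absurd hk (by omega),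
        fun k hk => absurd hk (by omega), fun k hk => absurd hk (by omega)⟩
    · obtain ⟨n, w, f, hw0, hwn, hout, hends, hm⟩ := ih
      obtain ⟨e, hme, hendse⟩ := hac
      refine ⟨n + 1, fun k => if k = 0 then a else w (k-1),
        fun k => if k = 0 then e else f (k-1), by simp, ?_, ?_, ?_, ?_⟩
      · simpa using hwn
      · intro k hk
        rcases Nat.eq_zero_or_pos k with rfl | hk1
        · simpa using haW
        · have h0 : ¬ (k = 0) := by omega
          show (if k = 0 then a else w (k-1)) ∉ W
          rw [if_neg h0]
          exact hout (k-1) (by omega)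
      · intro k hk
        rcases Nat.eq_zero_or_pos k with rfl | hk1
        · simpa [hw0] using hendse
        · have h0 : ¬ (k = 0) := by omega
          have h1 : ¬ (k + 1 = 0) := by omega
          show G.ends (if k = 0 then e else f (k-1))
              = s(if k = 0 then a else w (k-1), if k + 1 = 0 then a else w (k+1-1))
          rw [if_neg h0, if_neg h1, if_neg h0]
          have hidx : k + 1 - 1 = k - 1 + 1 := by omega
          rw [hidx]
          exact hends (k-1) (by omega)
      · intro k hk
        rcases Nat.eq_zero_or_pos k with rfl | hk1
        · simpa using hme
        · have h0 : ¬ (k = 0) := by omega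
          show 1 ≤ m (if k = 0 then e else f (k-1))
          rw [if_neg h0]
          exact hm (k-1) (by omega)

lemma goodwalk_nodup (m : E → ℕ) (W : Set V) (u : V) :
    ∀ n w f, G.GoodWalk m W u n w f →
      ∃ n' w' f', G.GoodWalk m W u n' w' f' ∧
        (∀ i j, i ≤ n' → j ≤ n' → w' i = w' j → i = j) := by
  intro n
  induction n using Nat.strong_induction_on with
  | _ n ih =>
    intro w f hgw
    by_cases hdup : ∃ i j, i < j ∧ j ≤ n ∧ w i = w j
    · obtain ⟨i, j, hij, hjn, hwij⟩ := hdup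
      obtain ⟨hw0, hwn, hout, hends, hm⟩ := hgw
      set d := j - i with hd
      set w' : ℕ → V := fun k => if k ≤ i then w k else w (k + d) with hw'
      set f' : ℕ → E := fun k => if k < i then f k else f (k + d) with hf'
      have hkey : ∀ k, i ≤ k → w' k = w (k + d) := by
        intro k hk
        rcases Nat.lt_or_ge i k with h | h
        · rw [hw']
          simp only
          rw [if_neg (by omega)]
        · have : k = i := by omega
          subst this
          rw [hw']
          simp only
          rw [if_pos (le_refl _)]
          have : k + d = j := by omega
          rw [this, hwij]
      have hgw' : G.GoodWalk m W u (n - d) w' f' := by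
        refine ⟨?_, ?_, ?_, ?_, ?_⟩
        · rw [hw']; simp only; rw [if_pos (by omega)]; exact hw0
        · rw [hkey (n - d) (by omega)]
          have : n - d + d = n := by omega
          rw [this]; exact hwn
        · intro k hk
          rcases le_or_gt k i with h | h
          · rw [hw']; simp only; rw [if_pos h]; exact hout k (by omega)
          · rw [hkey k (by omega)]; exact hout (k + d) (by omega)
        · intro k hk
          rcases Nat.lt_or_ge k i with h | h
          · rw [hf']; simp only; rw [if_pos h]
            have h1 : w' k = w k := by rw [hw']; simp only; rw [if_pos (by omega)]
            have h2 : w' (k+1) = w (k+1) := by rw [hw']; simp only; rw [if_pos (by omega)]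
            rw [h1, h2]; exact hends k (by omega)
          · rw [hf']; simp only; rw [if_neg (by omega)]
            rw [hkey k h, hkey (k+1) (by omega)]
            have : k + 1 + d = k + d + 1 := by omega
            rw [this]
            exact hends (k + d) (by omega)
        · intro k hk
          rcases Nat.lt_or_ge k i with h | h
          · rw [hf']; simp only; rw [if_pos h]; exact hm k (by omega)
          · rw [hf']; simp only; rw [if_neg (by omega)]; exact hm (k + d) (by omega)
      exact ih (n - d) (by omega) w' f' hgw'
    · push_neg at hdup
      refine ⟨n, w, f, hgw, ?_⟩
      intro a b ha hb hab
      rcases lt_trichotomy a b with h | h | h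
      · exact absurd hab (hdup a b h hb)
      · exact h
      · exact absurd hab.symm (hdup b a h ha)


lemma build_ear (W : Set V) (e₀ : E) (a b : V) (hends₀ : G.ends e₀ = s(a, b))
    (haW : a ∈ W) (m' : E → ℕ) (hm'e₀ : m' e₀ = 0)
    (n : ℕ) (w : ℕ → V) (f : ℕ → E) (hgw : G.GoodWalk m' W b n w f)
    (hinj : ∀ i j, i ≤ n → j ≤ n → w i = w j → i = j) :
    ∃ P : Ear V E, G.EarOK W P ∧ e₀ ∈ P.2 ∧
      (∀ e ∈ P.2, e = e₀ ∨ ∃ v, v ∈ G.ends e ∧ v ∉ W) := by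
  obtain ⟨hw0, hwn, hout, hends, hm⟩ := hgw
  set wf : ℕ → V := fun k => if k = 0 then a else w (k-1) with hwf
  set ff : ℕ → E := fun k => if k = 0 then e₀ else f (k-1) with hff
  have hwf0 : wf 0 = a := by simp [hwf]
  have hwfs : ∀ k, 1 ≤ k → wf k = w (k-1) := by
    intro k hk
    rw [hwf]
    simp only
    rw [if_neg (by omega)]
  have hff0 : ff 0 = e₀ := by simp [hff]
  have hffs : ∀ k, 1 ≤ k → ff k = f (k-1) := by
    intro k hk
    rw [hff]
    simp only
    rw [if_neg (by omega)]
  have hchain : ∀ k, k < n + 1 → G.ends (ff k) = s(wf k, wf (k+1)) := by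
    intro k hk
    rcases Nat.eq_zero_or_pos k with rfl | hk1
    · rw [hff0, hwf0, hwfs 1 (by omega), hends₀]
      simp [hw0]
    · rw [hffs k hk1, hwfs k hk1, hwfs (k+1) (by omega)]
      have h1 : k + 1 - 1 = (k - 1) + 1 := by omega
      rw [h1]
      exact hends (k-1) (by omega)
  have hffinj : ∀ j k, j < n + 1 → k < n + 1 → ff j = ff k → j = k := by
    intro j k hj hk hjk
    rcases Nat.eq_zero_or_pos j with rfl | hj1 <;> rcases Nat.eq_zero_or_pos k with rfl | hk1
    · rfl
    · exfalso
      rw [hff0, hffs k hk1] at hjk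
      have := hm (k-1) (by omega)
      rw [← hjk, hm'e₀] at this
      omega
    · exfalso
      rw [hff0, hffs j hj1] at hjk
      have := hm (j-1) (by omega)
      rw [hjk, hm'e₀] at this
      omega
    · rw [hffs j hj1, hffs k hk1] at hjk
      have h1 := hends (j-1) (by omega)
      have h2 := hends (k-1) (by omega)
      rw [hjk, h2] at h1
      rw [Sym2.eq_iff] at h1
      rcases h1 with ⟨hA, hB⟩ | ⟨hA, hB⟩
      · have := hinj (k-1) (j-1) (by omega) (by omega) hA
        omega
      · have e1 := hinj (k-1) (j-1+1) (by omega) (by omega) hA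
        have e2 := hinj (k-1+1) (j-1) (by omega) (by omega) hB
        omega
  refine ⟨(List.ofFn (fun k : Fin (n+2) => wf k), List.ofFn (fun k : Fin (n+1) => ff k)),
    ⟨?_, ?_, ?_, ?_, ?_, ?_, ?_, ?_⟩, ?_, ?_⟩
  · simp
  · apply List.ne_nil_of_length_pos
    simp
  · rw [List.nodup_ofFn]
    intro j k hjk
    simp only at hjk
    exact Fin.ext (hffinj j k j.isLt k.isLt hjk)
  · intro i h
    have hi : i < n + 1 := by simpa using h
    refine ⟨wf i, wf (i+1), ?_, ?_, ?_⟩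
    · rw [List.getElem?_eq_getElem (by simp only [List.length_ofFn]; omega)]
      rw [List.getElem_ofFn]
    · rw [List.getElem?_eq_getElem (by simp only [List.length_ofFn]; omega)]
      rw [List.getElem_ofFn]
    · have hget : (List.ofFn (fun k : Fin (n+1) => ff k)).get ⟨i, h⟩ = ff i := by
        rw [List.get_eq_getElem, List.getElem_ofFn]
      rw [hget]
      exact hchain i hi
  · refine ⟨a, ?_, haW⟩
    rw [List.head?_eq_getElem?, List.getElem?_eq_getElem (by simp : 0 < (List.ofFn (fun k : Fin (n+2) => wf k)).length)]
    rw [List.getElem_ofFn]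
    simp [hwf0]
  · refine ⟨w n, ?_, hwn⟩
    rw [List.getLast?_eq_getElem?]
    rw [List.getElem?_eq_getElem (by simp : (List.ofFn (fun k : Fin (n+2) => wf k)).length - 1 < (List.ofFn (fun k : Fin (n+2) => wf k)).length)]
    rw [List.getElem_ofFn]
    have hidx : ((List.ofFn (fun k : Fin (n+2) => wf k)).length - 1) = n + 1 := by simp
    congr 1
    rw [show ((⟨(List.ofFn (fun k : Fin (n+2) => wf k)).length - 1, by simp⟩ : Fin (n+2)) : ℕ) = n + 1 from hidx]
    rw [hwfs (n + 1) (by omega)]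
    congr 1
  · -- innList nodup
    rw [List.nodup_iff_injective_get]
    intro ⟨j, hj⟩ ⟨k, hk⟩ hjk
    have hlen : (innList ((List.ofFn fun k : Fin (n+2) => wf k), (List.ofFn fun k : Fin (n+1) => ff k))).length = n := by
      rw [innList_length]
      simp
    rw [List.get_eq_getElem, List.get_eq_getElem, innList_getElem, innList_getElem] at hjk
    simp only [List.getElem_ofFn] at hjk
    rw [hwfs (j+1) (by omega), hwfs (k+1) (by omega)] at hjk
    simp only [Nat.add_sub_cancel] at hjk
    have := hinj j k (by omega) (by omega) hjk
    exact Fin.ext this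
  · -- innList out of W
    intro x hx
    have hlen : (innList ((List.ofFn fun k : Fin (n+2) => wf k), (List.ofFn fun k : Fin (n+1) => ff k))).length = n := by
      rw [innList_length]
      simp
    obtain ⟨j, hj, rfl⟩ := List.mem_iff_getElem.1 hx
    rw [innList_getElem]
    simp only [List.getElem_ofFn]
    rw [hwfs (j+1) (by omega)]
    simp only [Nat.add_sub_cancel]
    exact hout j (by omega)
  · -- e₀ ∈ P.2
    rw [List.mem_ofFn]
    exact ⟨⟨0, by omega⟩, hff0⟩
  · -- every ear edge is e₀ or has an end outside W
    intro e he
    rw [List.mem_ofFn] at he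
    obtain ⟨⟨k, hk⟩, rfl⟩ := he
    simp only
    rcases Nat.eq_zero_or_pos k with rfl | hk1
    · left
      exact hff0
    · right
      rw [hffs k hk1, hends (k-1) (by omega)]
      exact ⟨w (k-1), Sym2.mem_mk_left _ _, hout (k-1) (by omega)⟩


lemma covered_ends (r : V) (ears : List (Ear V E))
    (hOKs : ∀ i : ℕ, ∀ h : i < ears.length,
      G.EarOK (vertsUpTo r (ears.take i)) (ears.get ⟨i, h⟩)) :
    ∀ e ∈ ears.flatMap Prod.snd, ∀ v, v ∈ G.ends e → v ∈ vertsUpTo r ears := by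
  intro e he v hv
  obtain ⟨P, hP, heP⟩ := List.mem_flatMap.1 he
  obtain ⟨i, hi, rfl⟩ := List.mem_iff_getElem.1 hP
  have hmm := G.earOK_ends_mem (hOKs i hi) e heP v hv
  exact Set.mem_insert_iff.2 (Or.inr ⟨ears[i], hP, hmm⟩)

lemma decomp_extend (hG : G.TwoEdgeConnected) (r : V) :
    ∀ N : ℕ, ∀ ears : List (Ear V E),
      (∀ i : ℕ, ∀ h : i < ears.length,
        G.EarOK (vertsUpTo r (ears.take i)) (ears.get ⟨i, h⟩)) →
      (ears.flatMap Prod.snd).Nodup →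
      (Finset.univ.filter (fun e => e ∉ ears.flatMap Prod.snd)).card ≤ N →
      ∃ ears' : List (Ear V E),
        (∀ i : ℕ, ∀ h : i < ears'.length,
          G.EarOK (vertsUpTo r (ears'.take i)) (ears'.get ⟨i, h⟩)) ∧
        (ears'.flatMap Prod.snd).Nodup ∧
        (∀ e : E, e ∈ ears'.flatMap Prod.snd) := by
  intro N
  induction N with
  | zero =>
    intro ears hOKs hnd hcard
    refine ⟨ears, hOKs, hnd, ?_⟩
    intro e
    by_contra h
    have : e ∈ Finset.univ.filter (fun e => e ∉ ears.flatMap Prod.snd) :=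
      Finset.mem_filter.2 ⟨Finset.mem_univ e, h⟩
    have := Finset.card_pos.2 ⟨e, this⟩
    omega
  | succ N ih =>
    intro ears hOKs hnd hcard
    by_cases hall : ∀ e : E, e ∈ ears.flatMap Prod.snd
    · exact ⟨ears, hOKs, hnd, hall⟩
    push_neg at hall
    obtain ⟨e₁, he₁⟩ := hall
    set W := vertsUpTo r ears with hW
    set D : Set E := {e | e ∈ ears.flatMap Prod.snd} with hDdef
    have hD : ∀ e ∈ D, ∀ v, v ∈ G.ends e → v ∈ W := fun e he => G.covered_ends r ears hOKs e he
    have hrW : r ∈ W := Set.mem_insert _ _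
    obtain ⟨x, y, hxy, hxyends⟩ := G.ends_two e₁
    have hfe : ∃ e, e ∉ D ∧ ∃ a, a ∈ W ∧ a ∈ G.ends e := by
      rcases G.frontier (fun _ => 1) W D hD hrW (hG.2.1 r x) with hxW | h
      · exact ⟨e₁, he₁, x, hxW, by rw [hxyends]; exact Sym2.mem_mk_left _ _⟩
      · exact h
    obtain ⟨e₀, he₀D, a, haW, haends⟩ := hfe
    obtain ⟨x₀, y₀, hxy₀, hends₀⟩ := G.ends_two e₀
    have hab : ∃ b, G.ends e₀ = s(a, b) := by
      rw [hends₀] at haends ⊢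
      rw [Sym2.mem_iff] at haends
      rcases haends with rfl | rfl
      · exact ⟨y₀, rfl⟩
      · exact ⟨x₀, Sym2.eq_swap⟩
    obtain ⟨b, hends₀'⟩ := hab
    set m' := Function.update (fun _ : E => 1) e₀ ((fun _ : E => 1) e₀ - 1) with hm'
    have hconn' : G.Conn m' := hG.2.2 e₀ (le_refl 1)
    have hm'e₀ : m' e₀ = 0 := by rw [hm']; simp
    obtain ⟨n₀, w₀, f₀, hgw₀⟩ := G.reach_goodwalk m' W r hrW ⟨e₀⟩ b (hconn' b r)
    obtain ⟨n, w, f, hgw, hinj⟩ := G.goodwalk_nodup m' W b n₀ w₀ f₀ hgw₀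
    obtain ⟨P, hPOK, he₀P, hPout⟩ := G.build_ear W e₀ a b hends₀' haW m' hm'e₀ n w f hgw hinj
    have hPnd : P.2.Nodup := hPOK.2.2.1
    have hPdisj : ∀ e ∈ ears.flatMap Prod.snd, e ∉ P.2 := by
      intro e he heP
      rcases hPout e heP with rfl | ⟨v, hv, hvW⟩
      · exact he₀D he
      · exact hvW (hD e he v hv)
    have hflat : (ears ++ [P]).flatMap Prod.snd = ears.flatMap Prod.snd ++ P.2 := by simp
    apply ih (ears ++ [P])
    · -- EarOK conditions
      intro i h
      rw [List.length_append, List.length_cons, List.length_nil] at h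
      rcases Nat.lt_or_ge i ears.length with hi | hi
      · have ht : (ears ++ [P]).take i = ears.take i :=
          List.take_append_of_le_length (by omega)
        have hg : (ears ++ [P]).get ⟨i, by rw [List.length_append]; omega⟩
            = ears.get ⟨i, hi⟩ := by
          rw [List.get_eq_getElem, List.get_eq_getElem, List.getElem_append_left]
        rw [ht]
        convert hOKs i hi using 2
      · have hie : i = ears.length := by omega
        subst hie
        have ht : (ears ++ [P]).take ears.length = ears := by
          rw [List.take_append_of_le_length (le_refl _), List.take_length]
        have hg : (ears ++ [P]).get ⟨ears.length, by simp⟩ = P := by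
          rw [List.get_eq_getElem, List.getElem_append_right (le_refl _)]
          simp
        rw [ht, hg]
        exact hPOK
    · rw [hflat, List.nodup_append]
      exact ⟨hnd, hPnd, fun a ha b hb hab => hPdisj a ha (hab ▸ hb)⟩
    · -- card decreases
      have hsub : (Finset.univ.filter (fun e => e ∉ (ears ++ [P]).flatMap Prod.snd))
          ⊂ (Finset.univ.filter (fun e => e ∉ ears.flatMap Prod.snd)) := by
        rw [Finset.ssubset_iff_of_subset]
        · refine ⟨e₀, ?_, ?_⟩
          · exact Finset.mem_filter.2 ⟨Finset.mem_univ _, fun h => he₀D h⟩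
          · intro hmem
            have := (Finset.mem_filter.1 hmem).2
            apply this
            rw [hflat]
            exact List.mem_append_right _ he₀P
        · intro e he
          have h2 := (Finset.mem_filter.1 he).2
          refine Finset.mem_filter.2 ⟨Finset.mem_univ _, fun hh => h2 ?_⟩
          rw [hflat]
          exact List.mem_append_left _ hh
      have := Finset.card_lt_card hsub
      omega

lemma exists_decomp (hG : G.TwoEdgeConnected) :
    ∃ (r : V) (ears : List (Ear V E)), G.IsEarDecomp r ears := by
  have hV : Nonempty V := Fintype.card_pos_iff.1 (by have := hG.1; omega)
  obtain ⟨r⟩ := hV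
  obtain ⟨ears, hOKs, hnd, hcov⟩ := G.decomp_extend hG r (Fintype.card E) []
    (by intro i h; simp at h) (by simp) (by rw [← Finset.card_univ]; exact Finset.card_filter_le _ _)
  refine ⟨r, ears, hOKs, ?_, hcov, hnd⟩
  apply Set.eq_univ_of_forall
  intro v
  have hD : ∀ e ∈ {e : E | e ∈ ears.flatMap Prod.snd}, ∀ u, u ∈ G.ends e → u ∈ vertsUpTo r ears :=
    fun e he => G.covered_ends r ears hOKs e he
  rcases G.frontier (fun _ => 1) (vertsUpTo r ears) {e | e ∈ ears.flatMap Prod.snd} hD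
    (Set.mem_insert _ _) (hG.2.1 r v) with h | ⟨e, heD, _⟩
  · exact h
  · exact absurd (hcov e) heD

end Walks


end MGraph

namespace Graph

theorem stmt_7 {V E : Type} [Fintype V] [Fintype E] [DecidableEq V] [DecidableEq E]
    (G : MGraph V E) (hG : G.TwoEdgeConnected)
    (T : Finset V) (hT : Even T.card) :
    ∃ F : Finset E, G.IsTJoinF T F ∧
      2 * F.card + 1 ≤ Fintype.card V + G.phi := by
  obtain ⟨r, ears, hED⟩ := G.exists_decomp hG
  have hne : {n | ∃ (r : V) (ears : List (MGraph.Ear V E)), G.IsEarDecomp r ears ∧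
      (ears.countP fun P => decide (Even P.2.length)) = n}.Nonempty :=
    ⟨_, r, ears, hED, rfl⟩
  obtain ⟨r', ears', hED', hcount⟩ := Nat.sInf_mem hne
  obtain ⟨F, hF1, hF2⟩ := G.decomp_to_tjoin r' ears' hED' T hT
  refine ⟨F, hF1, ?_⟩
  have hphi : G.phi = ears'.countP (fun P => decide (Even P.2.length)) := by
    rw [MGraph.phi]
    exact hcount.symm
  omega


end Graph
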